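/- Let J ≥ 1 and let 0 < t_J ≤ t_{J−1} ≤ ... ≤ t_1 ≤ 1. Suppose q_1,...,q_J : (0,1] → ℝ are continuous functions such that, with q_0 ≡ 0, for every j ∈ {1,...,J}: q_j(x) = 0 for x ∈ (0, t_j] and q_j(x) + (1/x)·∫_x^1 [q_j(y) − q_{j−1}(y)] dy = 1 for x ∈ [t_j, 1]. Then ∫_0^1 q_J(y) dy = ∑_{j=1}^J t_j. -/

import Mathlib

open MeasureTheory intervalIntegral

lemma aux_vanish_int (f : ℝ → ℝ) (a : ℝ) (ha : 0 < a) (ha1 : a ≤ 1)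
    (hc : ContinuousOn f (Set.Ioc 0 1)) (hv : ∀ x ∈ Set.Ioc (0:ℝ) a, f x = 0) :
    IntervalIntegrable f volume a 1 ∧
      (∫ y in (0:ℝ)..1, f y) = ∫ y in a..1, f y := by
  have hsub : Set.Icc a 1 ⊆ Set.Ioc 0 1 := fun x hx => ⟨lt_of_lt_of_le ha hx.1, hx.2⟩
  have h3 : IntervalIntegrable f volume a 1 := by
    apply ContinuousOn.intervalIntegrable
    rw [Set.uIcc_of_le ha1]
    exact hc.mono hsub
  refine ⟨h3, ?_⟩
  have h1 : IntegrableOn f (Set.Ioc 0 a) := by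
    rw [integrableOn_congr_fun hv measurableSet_Ioc]
    exact integrableOn_zero
  have h2 : IntervalIntegrable f volume 0 a :=
    (intervalIntegrable_iff_integrableOn_Ioc_of_le ha.le).mpr h1
  have hzero : (∫ y in (0:ℝ)..a, f y) = 0 := by
    rw [intervalIntegral.integral_of_le ha.le]
    rw [MeasureTheory.setIntegral_congr_fun measurableSet_Ioc hv]
    simp
  have hadd := intervalIntegral.integral_add_adjacent_intervals h2 h3
  rw [← hadd, hzero, zero_add]

/-- The dual objective value of the complementary slackness system with thresholds
`0 < t_J ≤ ⋯ ≤ t_1 ≤ 1`: if continuous functions `q_1, …, q_J` on `(0,1]` (with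
`q_0 ≡ 0`) vanish on `(0, t_j]` and satisfy
`q_j x + (1/x) ∫_x^1 (q_j - q_(j-1)) = 1` on `[t_j, 1]`, then
`∫_0^1 q_J = ∑_{j=1}^J t_j`. -/
theorem dual_objective_eq_sum_thresholds
    (J : ℕ) (hJ : 1 ≤ J) (t : ℕ → ℝ)
    (htJ : 0 < t J) (ht1 : t 1 ≤ 1)
    (hmono : ∀ j : ℕ, 1 ≤ j → j < J → t (j + 1) ≤ t j)
    (q : ℕ → ℝ → ℝ)
    (hq0 : ∀ x : ℝ, q 0 x = 0)
    (hcont : ∀ j ∈ Finset.Icc 1 J, ContinuousOn (q j) (Set.Ioc 0 1))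
    (hvanish : ∀ j ∈ Finset.Icc 1 J, ∀ x ∈ Set.Ioc (0 : ℝ) (t j), q j x = 0)
    (heq : ∀ j ∈ Finset.Icc 1 J, ∀ x ∈ Set.Icc (t j) 1,
      q j x + (1 / x) * (∫ y in x..(1 : ℝ), (q j y - q (j - 1) y)) = 1) :
    (∫ y in (0 : ℝ)..1, q J y) = ∑ j ∈ Finset.Icc 1 J, t j := by
  -- antitonicity of t on [1, J]
  have hmono' : ∀ i j : ℕ, 1 ≤ i → i ≤ j → j ≤ J → t j ≤ t i := by
    intro i j hi hij hjJ
    induction j with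
    | zero => omega
    | succ k ih =>
      rcases Nat.lt_or_ge i (k+1) with h | h
      · have hk : 1 ≤ k := by omega
        have := hmono k hk (by omega)
        exact le_trans this (ih (by omega) (by omega))
      · have : i = k + 1 := by omega
        subst this; rfl
  have hpos : ∀ j : ℕ, 1 ≤ j → j ≤ J → 0 < t j := fun j h1 h2 =>
    lt_of_lt_of_le htJ (hmono' j J h1 h2 le_rfl)
  have hle1 : ∀ j : ℕ, 1 ≤ j → j ≤ J → t j ≤ 1 := fun j h1 h2 =>
    le_trans (hmono' 1 j le_rfl h1 h2) ht1
  -- properties of the predecessor q (j-1)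
  have hprev : ∀ j : ℕ, 1 ≤ j → j ≤ J →
      ContinuousOn (q (j-1)) (Set.Ioc 0 1) ∧
      (∀ x ∈ Set.Ioc (0:ℝ) (t j), q (j-1) x = 0) := by
    intro j h1 h2
    rcases Nat.eq_or_lt_of_le h1 with h | h
    · have : j - 1 = 0 := by omega
      rw [this]
      refine ⟨?_, fun x _ => hq0 x⟩
      exact continuousOn_const.congr (fun x _ => hq0 x)
    · have hj1 : j - 1 ∈ Finset.Icc 1 J := by
        simp only [Finset.mem_Icc]; omega
      refine ⟨hcont _ hj1, fun x hx => ?_⟩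
      apply hvanish _ hj1
      exact ⟨hx.1, le_trans hx.2 (hmono' (j-1) j (by omega) (by omega) h2)⟩
  -- key step
  have key : ∀ j : ℕ, 1 ≤ j → j ≤ J →
      (∫ y in (0:ℝ)..1, q j y) = (∫ y in (0:ℝ)..1, q (j-1) y) + t j := by
    intro j h1 h2
    have hjmem : j ∈ Finset.Icc 1 J := by simp only [Finset.mem_Icc]; omega
    have htj : 0 < t j := hpos j h1 h2
    have htj1 : t j ≤ 1 := hle1 j h1 h2
    obtain ⟨hintj, heqj⟩ := aux_vanish_int (q j) (t j) htj htj1 (hcont _ hjmem)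
      (hvanish _ hjmem)
    obtain ⟨hcp, hvp⟩ := hprev j h1 h2
    obtain ⟨hintp, heqp⟩ := aux_vanish_int (q (j-1)) (t j) htj htj1 hcp hvp
    -- evaluate heq at x = t j
    have hE := heq j hjmem (t j) ⟨le_rfl, htj1⟩
    have hq0tj : q j (t j) = 0 := hvanish _ hjmem (t j) ⟨htj, le_rfl⟩
    rw [hq0tj, zero_add] at hE
    rw [intervalIntegral.integral_sub hintj hintp] at hE
    have htjne : t j ≠ 0 := ne_of_gt htj
    field_simp at hE
    rw [heqj, heqp]
    linarith [hE]
  -- induction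
  suffices h : ∀ j : ℕ, j ≤ J → (∫ y in (0:ℝ)..1, q j y) = ∑ i ∈ Finset.Icc 1 j, t i by
    exact h J le_rfl
  intro j
  induction j with
  | zero =>
    intro _
    simp [hq0]
  | succ k ih =>
    intro hk
    have hsum : ∑ i ∈ Finset.Icc 1 (k+1), t i = (∑ i ∈ Finset.Icc 1 k, t i) + t (k+1) :=
      Finset.sum_Icc_succ_top (by omega) t
    rw [hsum, ← ih (by omega)]
    have := key (k+1) (by omega) hk
    simpa using this
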